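/- arXiv:0901.1761 — 5 statements merged into one kernel-verified Lean document; each statement's English description precedes it below -/
import Mathlib

section
/- Let a : Fin n → ℝ be injective, let x ∈ ℝ, and set low := {i : a i ≤ x} and high := {i : x < a i}. Fix indices L ≤ R < n, let W := {i : L ≤ i ≤ R}, and let m := |low ∩ W|. Then for every p with 1 ≤ p ≤ |W|: if p ≤ m, the p-th smallest element of the image a(W) equals the p-th smallest element of a(low ∩ W); and if p > m, the p-th smallest element of a(W) equals the (p − m)-th smallest element of a(high ∩ W). -/
open Finset

lemma sort_union_of_lt {s t : Finset ℝ} (h : ∀ a ∈ s, ∀ b ∈ t, a < b) :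
    (s ∪ t).sort (· ≤ ·) = s.sort (· ≤ ·) ++ t.sort (· ≤ ·) := by
  have hd : Disjoint s t := by
    rw [Finset.disjoint_left]
    intro a has hat
    exact lt_irrefl a (h a has a hat)
  symm
  refine (fun (hp : List.Perm _ _) (h1 : List.Pairwise (· ≤ ·) _) (h2 : List.Pairwise (· ≤ ·) _) =>
    List.Perm.eq_of_pairwise' (r := ((· ≤ ·) : ℝ → ℝ → Prop)) h1 h2 hp) ?_ ?_ ?_
  · rw [← Multiset.coe_eq_coe]
    rw [← Multiset.coe_add, Finset.sort_eq, Finset.sort_eq, Finset.sort_eq,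
      ← Finset.disjUnion_eq_union s t hd]
    rfl
  · rw [List.pairwise_append]
    refine ⟨Finset.pairwise_sort _ _, Finset.pairwise_sort _ _, ?_⟩
    intro a hae b hbe
    exact (h a (Finset.mem_sort _ |>.1 hae) b (Finset.mem_sort _ |>.1 hbe)).le
  · exact Finset.pairwise_sort _ _

/-- The key observation behind the range-median algorithm: a rank query on the
values of a window `W = [L, R]` of an (injective) array `a : Fin n → ℝ` reduces,
after counting the number `m` of low-valued elements (value `≤ x`) with index in
the window, to a rank query on the low part (if `p ≤ m`) or on the high part
with rank `p - m` (if `p > m`). The `p`-th smallest element of a finite set of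
reals is the element at 1-indexed position `p` of its increasing enumeration. -/
theorem range_median_key_observation {n : ℕ} (a : Fin n → ℝ)
    (ha : Function.Injective a) (x : ℝ) (L R : Fin n) (hLR : L ≤ R)
    (p : ℕ) (hp1 : 1 ≤ p) (hp2 : p ≤ (Finset.Icc L R).card) :
    let low : Finset (Fin n) := Finset.univ.filter (fun i => a i ≤ x)
    let high : Finset (Fin n) := Finset.univ.filter (fun i => x < a i)
    let W : Finset (Fin n) := Finset.Icc L R
    let m : ℕ := (low ∩ W).card
    (p ≤ m →
      ((W.image a).sort (· ≤ ·))[p - 1]? =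
        (((low ∩ W).image a).sort (· ≤ ·))[p - 1]?) ∧
    (m < p →
      ((W.image a).sort (· ≤ ·))[p - 1]? =
        (((high ∩ W).image a).sort (· ≤ ·))[p - m - 1]?) := by
  intro low high W m
  have hWsplit : W = (low ∩ W) ∪ (high ∩ W) := by
    ext i
    simp only [Finset.mem_union, Finset.mem_inter, low, high, Finset.mem_filter,
      Finset.mem_univ, true_and]
    rcases le_or_gt (a i) x with h | h <;> tauto
  have hcross : ∀ u ∈ (low ∩ W).image a, ∀ v ∈ (high ∩ W).image a, u < v := by
    intro u hu v hv
    obtain ⟨i, hi, rfl⟩ := Finset.mem_image.1 hu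
    obtain ⟨j, hj, rfl⟩ := Finset.mem_image.1 hv
    have h1 : a i ≤ x := (Finset.mem_filter.1 (Finset.mem_inter.1 hi).1).2
    have h2 : x < a j := (Finset.mem_filter.1 (Finset.mem_inter.1 hj).1).2
    exact lt_of_le_of_lt h1 h2
  have hsort : (W.image a).sort (· ≤ ·) =
      ((low ∩ W).image a).sort (· ≤ ·) ++ ((high ∩ W).image a).sort (· ≤ ·) := by
    conv_lhs => rw [hWsplit, Finset.image_union]
    exact sort_union_of_lt hcross
  have hlen : (((low ∩ W).image a).sort (· ≤ ·)).length = m := by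
    rw [Finset.length_sort, Finset.card_image_of_injective _ ha]
  constructor
  · intro hpm
    rw [hsort, List.getElem?_append, hlen, if_pos (by omega)]
  · intro hmp
    rw [hsort, List.getElem?_append_right (by rw [hlen]; omega)]
    rw [hlen]
    congr 1
    omega
end

section
/- Let A be a list over a type α, let P be a decidable predicate on α, and let l ≤ r ≤ length(A) be natural numbers. Define cnt(t) to be the number of elements satisfying P among the first t elements of A. Then taking the filtered list A.filter P, dropping its first cnt(l) elements and keeping the next cnt(r) − cnt(l) elements yields exactly the list obtained by filtering P on the contiguous segment of A consisting of positions l, l+1, …, r−1 (i.e., ((A.drop l).take (r − l)).filter P). -/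
/-- Array-contraction correctness underlying the linear-space RAM algorithm:
letting `cnt t` be the number of elements satisfying `P` among the first `t`
elements of `A`, dropping the first `cnt l` elements of the filtered list
`A.filter P` and keeping the next `cnt r − cnt l` ones yields exactly the
result of filtering `P` on the contiguous segment of positions `l, …, r−1`. -/
theorem filter_segment_contraction {α : Type*} (A : List α)
    (P : α → Prop) [DecidablePred P] (l r : ℕ) (hlr : l ≤ r) (hr : r ≤ A.length) :
    (((A.filter (fun a => decide (P a))).drop
          ((A.take l).filter (fun a => decide (P a))).length).take
        (((A.take r).filter (fun a => decide (P a))).length -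
          ((A.take l).filter (fun a => decide (P a))).length)) =
      ((A.drop l).take (r - l)).filter (fun a => decide (P a)) := by
  set p : α → Bool := fun a => decide (P a) with hp
  have htr : A.take r = A.take l ++ (A.drop l).take (r - l) := by
    rw [← List.take_add, Nat.add_sub_cancel' hlr]
  have hA : A.filter p =
      (A.take l).filter p ++ (((A.drop l).take (r - l)).filter p ++ (A.drop r).filter p) := by
    conv_lhs => rw [← List.take_append_drop r A, htr]
    simp [List.filter_append]
  have hcnt : ((A.take r).filter p).length
      = ((A.take l).filter p).length + (((A.drop l).take (r - l)).filter p).length := by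
    rw [htr]; simp [List.filter_append]
  rw [hA, hcnt, Nat.add_sub_cancel_left, List.drop_left, List.take_left]
end

section
/- Let A be a list of pairwise distinct real numbers of length n, let x ∈ ℝ, and let 1 ≤ L ≤ R ≤ n and 1 ≤ p ≤ R − L + 1. Let Alow := A.filter (· ≤ x) and Ahigh := A.filter (· > x). Let l be the number of elements ≤ x among the first L − 1 elements of A, let r be the number of elements ≤ x among the first R elements of A, and let m := r − l. Then: if p ≤ m, the p-th smallest element of the segment A[L..R] (positions L through R of A, 1-indexed) equals the p-th smallest element of the segment Alow[l+1..r]; and if p > m, it equals the (p − m)-th smallest element of the segment Ahigh[(L−l)..(R−r)]. -/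
/-- The segment of a list consisting of the 1-indexed positions `i` through `j`. -/
def listSeg (A : List ℝ) (i j : ℕ) : List ℝ :=
  (A.drop (i - 1)).take (j - i + 1)

/-- The `p`-th smallest element (1-indexed rank `p`) of a list of reals:
position `p` of its non-decreasing sorted enumeration. -/
noncomputable def kthSmallest (A : List ℝ) (p : ℕ) : Option ℝ :=
  (A.insertionSort (· ≤ ·))[p - 1]?

lemma filter_high_eq (S : List ℝ) (x : ℝ) :
    S.filter (fun e => e > x) = S.filter (fun e => !(decide (e ≤ x))) := by
  apply List.filter_congr
  intro a _
  simp [← decide_not, decide_eq_decide, not_le]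

lemma sort_split (S : List ℝ) (x : ℝ) :
    S.insertionSort (· ≤ ·) =
      (S.filter (fun e => e ≤ x)).insertionSort (· ≤ ·) ++
        (S.filter (fun e => e > x)).insertionSort (· ≤ ·) := by
  have h1 : (S.insertionSort (· ≤ ·)).Perm S := List.perm_insertionSort _ _
  have h2 : ((S.filter (fun e => e ≤ x)).insertionSort (· ≤ ·) ++
      (S.filter (fun e => e > x)).insertionSort (· ≤ ·)).Perm
      (S.filter (fun e => e ≤ x) ++ S.filter (fun e => e > x)) :=
    (List.perm_insertionSort _ _).append (List.perm_insertionSort _ _)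
  have h3 : (S.filter (fun e => e ≤ x) ++ S.filter (fun e => e > x)).Perm S := by
    rw [filter_high_eq]
    exact List.filter_append_perm _ S
  refine List.Perm.eq_of_pairwise' (r := fun a b : ℝ => a ≤ b) ?_ ?_ (h1.trans ((h3.symm).trans h2.symm))
  · exact List.pairwise_insertionSort _ _
  · rw [List.pairwise_append]
    refine ⟨List.pairwise_insertionSort _ _, List.pairwise_insertionSort _ _, ?_⟩
    intro a ha b hb
    have ha' : a ∈ S.filter (fun e => e ≤ x) := (List.perm_insertionSort _ _).mem_iff.1 ha
    have hb' : b ∈ S.filter (fun e => e > x) := (List.perm_insertionSort _ _).mem_iff.1 hb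
    have hax : a ≤ x := by simpa using (List.mem_filter.1 ha').2
    have hbx : x < b := by simpa using (List.mem_filter.1 hb').2
    exact hax.trans hbx.le

/-- The single-step invariant of Algorithm 2 of the paper: for a list `A` of
pairwise distinct reals, a rank-`p` query on the 1-indexed segment `A[L..R]`
reduces, after computing the prefix counts `l` and `r` of elements `≤ x` among
the first `L − 1` resp. `R` elements, to a rank query on a contracted segment
of the low part `A.filter (· ≤ x)` (rank `p`, if `p ≤ m := r − l`) or of the
high part `A.filter (· > x)` (rank `p − m`, otherwise). -/
theorem range_select_step_contracted (A : List ℝ) (n : ℕ) (hn : A.length = n)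
    (hdist : A.Pairwise (· ≠ ·)) (x : ℝ) (L R p : ℕ)
    (hL : 1 ≤ L) (hLR : L ≤ R) (hR : R ≤ n) (hp1 : 1 ≤ p) (hp2 : p ≤ R - L + 1) :
    let Alow := A.filter (fun e => e ≤ x)
    let Ahigh := A.filter (fun e => e > x)
    let l := ((A.take (L - 1)).filter (fun e => e ≤ x)).length
    let r := ((A.take R).filter (fun e => e ≤ x)).length
    let m := r - l
    (p ≤ m →
      kthSmallest (listSeg A L R) p = kthSmallest (listSeg Alow (l + 1) r) p) ∧
    (m < p →
      kthSmallest (listSeg A L R) p =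
        kthSmallest (listSeg Ahigh (L - l) (R - r)) (p - m)) := by
  intro Alow Ahigh l r m
  set S := listSeg A L R with hS
  set Slow := S.filter (fun e => e ≤ x) with hSlow
  set Shigh := S.filter (fun e => e > x) with hShigh
  have hTake : A.take R = A.take (L - 1) ++ S := by
    have h2 : R = (L - 1) + (R - L + 1) := by omega
    conv_lhs => rw [h2, List.take_add]
    rw [hS, listSeg]
  have hlen1 : (A.take (L - 1)).length = L - 1 := by
    rw [List.length_take]; omega
  have hlenS : S.length = R - L + 1 := by
    rw [hS, listSeg, List.length_take, List.length_drop]; omega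
  have hr : r = l + Slow.length := by
    show ((A.take R).filter (fun e => e ≤ x)).length = _
    rw [hTake, List.filter_append, List.length_append]
  have hlle : l ≤ L - 1 := by
    have := List.length_filter_le (fun e => decide (e ≤ x)) (A.take (L - 1))
    rw [hlen1] at this; exact this
  have hSlowle : Slow.length ≤ R - L + 1 := by
    have := List.length_filter_le (fun e => decide (e ≤ x)) S
    rw [hlenS] at this; rw [hSlow]; exact this
  have hAlow : Alow = (A.take (L - 1)).filter (fun e => e ≤ x) ++
      (Slow ++ (A.drop R).filter (fun e => e ≤ x)) := by
    show A.filter (fun e => e ≤ x) = _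
    conv_lhs => rw [← List.take_append_drop R A]
    rw [List.filter_append, hTake, List.filter_append, List.append_assoc]
  have hAhigh : Ahigh = (A.take (L - 1)).filter (fun e => e > x) ++
      (Shigh ++ (A.drop R).filter (fun e => e > x)) := by
    show A.filter (fun e => e > x) = _
    conv_lhs => rw [← List.take_append_drop R A]
    rw [List.filter_append, hTake, List.filter_append, List.append_assoc]
  have hhighpre : ((A.take (L - 1)).filter (fun e => e > x)).length = L - 1 - l := by
    have hperm := (List.filter_append_perm (fun e => decide (e ≤ x)) (A.take (L - 1))).length_eq
    rw [List.length_append, hlen1] at hperm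
    rw [filter_high_eq]
    omega
  have hhighS : Shigh.length = R - L + 1 - Slow.length := by
    have hperm := (List.filter_append_perm (fun e => decide (e ≤ x)) S).length_eq
    rw [List.length_append, hlenS, ← hSlow] at hperm
    rw [hShigh, filter_high_eq]
    omega
  have hm : m = Slow.length := by
    show r - l = _; omega
  have hsplit : S.insertionSort (· ≤ ·) =
      Slow.insertionSort (· ≤ ·) ++ Shigh.insertionSort (· ≤ ·) := by
    rw [hSlow, hShigh]; exact sort_split S x
  have hlensortlow : (Slow.insertionSort (· ≤ ·)).length = Slow.length :=
    (List.perm_insertionSort _ _).length_eq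
  constructor
  · intro hpm
    have hseg : listSeg Alow (l + 1) r = Slow := by
      have e1 : r - (l + 1) + 1 = Slow.length := by omega
      rw [listSeg, Nat.add_sub_cancel, e1, hAlow, List.drop_left' rfl, List.take_left' rfl]
    rw [hseg]
    simp only [kthSmallest]
    rw [hsplit, List.getElem?_append, if_pos (by rw [hlensortlow]; omega)]
  · intro hmp
    have hseg2 : listSeg Ahigh (L - l) (R - r) = Shigh := by
      have e0 : L - l - 1 = L - 1 - l := by omega
      have e1 : R - r - (L - l) + 1 = Shigh.length := by omega
      rw [listSeg, e0, e1, hAhigh, List.drop_left' hhighpre, List.take_left' rfl]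
    rw [hseg2]
    simp only [kthSmallest]
    rw [hsplit, List.getElem?_append_right (by rw [hlensortlow]; omega)]
    congr 1
    rw [hlensortlow]
    omega
end

section
/- Let k ≥ 1 and let s : Fin k → ℕ be a function such that for every j ∈ ℕ, the number of indices i with s(i) = j is at most 2^j. Then ∑_{i} (1/2)^{s(i)} ≤ log₂ k + 2. -/
open Finset

/-- Analysis of the lazy preprocessing of the range-median algorithm: if the
recursion level `s i` of query `i` satisfies that each level `j` occurs at most
`2^j` times among the `k` queries, then the total (normalized) preprocessing
work `∑ i, 2^{−s i}` is at most `log₂ k + 2`. -/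
theorem lazy_preprocessing_work_bound (k : ℕ) (hk : 1 ≤ k) (s : Fin k → ℕ)
    (h : ∀ j : ℕ, (Finset.univ.filter (fun i => s i = j)).card ≤ 2 ^ j) :
    ∑ i : Fin k, ((1 : ℝ) / 2) ^ (s i) ≤ Real.logb 2 k + 2 := by
  classical
  set L := Nat.log 2 k with hL
  have hsplit : ∑ i : Fin k, ((1:ℝ)/2)^(s i)
      = (∑ i ∈ univ.filter (fun i => s i ≤ L), ((1:ℝ)/2)^(s i))
      + ∑ i ∈ univ.filter (fun i => ¬ s i ≤ L), ((1:ℝ)/2)^(s i) :=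
    (Finset.sum_filter_add_sum_filter_not _ _ _).symm
  have hbu : univ.filter (fun i : Fin k => s i ≤ L)
      = (Finset.range (L+1)).biUnion (fun j => univ.filter (fun i => s i = j)) := by
    ext i
    simp only [mem_filter, mem_univ, true_and, mem_biUnion, Finset.mem_range,
      Nat.lt_succ_iff]
    constructor
    · intro hi; exact ⟨s i, hi, rfl⟩
    · rintro ⟨j, hj, rfl⟩; exact hj
  have hdisj : ∀ j1 ∈ Finset.range (L+1), ∀ j2 ∈ Finset.range (L+1), j1 ≠ j2 →
      Disjoint (univ.filter (fun i : Fin k => s i = j1))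
        (univ.filter (fun i : Fin k => s i = j2)) := by
    intro j1 _ j2 _ hne
    rw [Finset.disjoint_left]
    intro i hi1 hi2
    exact hne (((Finset.mem_filter.mp hi1).2.symm).trans (Finset.mem_filter.mp hi2).2)
  have h1 : (∑ i ∈ univ.filter (fun i => s i ≤ L), ((1:ℝ)/2)^(s i)) ≤ L + 1 := by
    rw [hbu, Finset.sum_biUnion hdisj]
    calc ∑ j ∈ Finset.range (L+1), ∑ i ∈ univ.filter (fun i : Fin k => s i = j),
          ((1:ℝ)/2)^(s i)
        ≤ ∑ j ∈ Finset.range (L+1), (1:ℝ) := by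
          apply Finset.sum_le_sum
          intro j _
          have : ∑ i ∈ univ.filter (fun i : Fin k => s i = j), ((1:ℝ)/2)^(s i)
              = (univ.filter (fun i : Fin k => s i = j)).card * ((1:ℝ)/2)^j := by
            rw [Finset.sum_congr rfl (fun i hi => by
              rw [(Finset.mem_filter.mp hi).2]), Finset.sum_const, nsmul_eq_mul]
          rw [this]
          have hc : ((univ.filter (fun i : Fin k => s i = j)).card : ℝ) ≤ 2^j := by
            exact_mod_cast h j
          calc ((univ.filter (fun i : Fin k => s i = j)).card : ℝ) * ((1:ℝ)/2)^j
              ≤ (2:ℝ)^j * ((1:ℝ)/2)^j := by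
                apply mul_le_mul_of_nonneg_right hc (by positivity)
            _ = 1 := by rw [← mul_pow]; norm_num
      _ = L + 1 := by rw [Finset.sum_const, Finset.card_range, nsmul_eq_mul, mul_one]; push_cast; ring
  have h2 : (∑ i ∈ univ.filter (fun i => ¬ s i ≤ L), ((1:ℝ)/2)^(s i)) ≤ 1 := by
    have hkL : (k:ℝ) ≤ 2^(L+1) := by
      exact_mod_cast (Nat.lt_pow_succ_log_self (by norm_num) k).le
    calc ∑ i ∈ univ.filter (fun i : Fin k => ¬ s i ≤ L), ((1:ℝ)/2)^(s i)
        ≤ ∑ i ∈ univ.filter (fun i : Fin k => ¬ s i ≤ L), ((1:ℝ)/2)^(L+1) := by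
          apply Finset.sum_le_sum
          intro i hi
          have hsi : L + 1 ≤ s i := Nat.succ_le_of_lt
            (Nat.lt_of_not_le (Finset.mem_filter.mp hi).2)
          exact pow_le_pow_of_le_one (by norm_num) (by norm_num) hsi
      _ = (univ.filter (fun i : Fin k => ¬ s i ≤ L)).card * ((1:ℝ)/2)^(L+1) := by
          rw [Finset.sum_const, nsmul_eq_mul]
      _ ≤ (k:ℝ) * ((1:ℝ)/2)^(L+1) := by
          apply mul_le_mul_of_nonneg_right _ (by positivity)
          exact_mod_cast (Finset.card_filter_le _ _).trans_eq (Finset.card_univ.trans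
            (Fintype.card_fin k))
      _ ≤ (2:ℝ)^(L+1) * ((1:ℝ)/2)^(L+1) := by
          apply mul_le_mul_of_nonneg_right hkL (by positivity)
      _ = 1 := by rw [← mul_pow]; norm_num
  have hlogb : (L : ℝ) ≤ Real.logb 2 k := by
    have h2L : ((2:ℝ))^L ≤ (k:ℝ) := by
      exact_mod_cast Nat.pow_log_le_self 2 (by omega)
    have := Real.logb_le_logb_of_le (b := 2) (by norm_num) (by positivity) h2L
    rwa [Real.logb_pow, Real.logb_self_eq_one one_lt_two, mul_one] at this
  rw [hsplit]
  push_cast at h1 ⊢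
  linarith
end

section
/- There exist a constant c > 0 and a natural number N such that for all natural numbers n and k with n ≥ N, 2 ≤ k, 2k ≤ n, and k dividing n, one has log( n! / ( k! · ((n/k − 1)!)^k ) ) ≥ c · n · log k. -/
open Nat

/-- Pairing `i·(k+1−i) ≥ k` gives `k^k ≤ (k!)^2`. -/
lemma pow_self_le_factorial_sq (k : ℕ) : k ^ k ≤ (k !) ^ 2 := by
  have h1 : (k !) ^ 2 = ∏ i ∈ Finset.range k, (i + 1) * (k - i) := by
    rw [Finset.prod_mul_distrib, Finset.prod_range_add_one_eq_factorial, sq]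
    congr 1
    rw [← Finset.prod_range_reflect]
    rw [← Finset.prod_range_add_one_eq_factorial]
    apply Finset.prod_congr rfl
    intro i hi
    simp only [Finset.mem_range] at hi
    omega
  have h0 : k ^ k = ∏ _i ∈ Finset.range k, k := by simp
  rw [h1, h0]
  apply Finset.prod_le_prod'
  intro i hi
  simp only [Finset.mem_range] at hi
  have h3 : 1 ≤ k - i := by omega
  calc k = (k - i) + i := by omega
    _ ≤ (k - i) + i * (k - i) := by
        have := Nat.mul_le_mul_left i h3
        omega
    _ = (i + 1) * (k - i) := by ring

lemma factorial_aux (m k : ℕ) : ∀ j, j ≤ k → (m * k)! * (j ! * (m + 1) ^ j) ≤ (m * k + j)! := by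
  intro j
  induction j with
  | zero => simp
  | succ j ih =>
    intro hj
    have h1 : (m * k)! * ((j + 1)! * (m + 1) ^ (j + 1)) =
        (m * k)! * (j ! * (m + 1) ^ j) * ((j + 1) * (m + 1)) := by
      rw [Nat.factorial_succ]; ring
    rw [h1]
    have h2 : (j + 1) * (m + 1) ≤ m * k + j + 1 := by nlinarith
    calc (m * k)! * (j ! * (m + 1) ^ j) * ((j + 1) * (m + 1))
        ≤ (m * k + j)! * (m * k + j + 1) :=
          Nat.mul_le_mul (ih (by omega)) h2
      _ = (m * k + (j + 1))! := by
          rw [show m * k + (j + 1) = (m * k + j) + 1 by ring, Nat.factorial_succ]; ring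

/-- `(k!)^m · (m!)^k ≤ (mk)!`. -/
lemma factorial_pow_mul_le (k : ℕ) : ∀ m, (k !) ^ m * (m !) ^ k ≤ (m * k)! := by
  intro m
  induction m with
  | zero => simp
  | succ m ih =>
    have h1 : (k !) ^ (m + 1) * ((m + 1)!) ^ k =
        (k !) ^ m * (m !) ^ k * (k ! * (m + 1) ^ k) := by
      rw [Nat.factorial_succ, mul_pow]; ring
    rw [h1]
    calc (k !) ^ m * (m !) ^ k * (k ! * (m + 1) ^ k)
        ≤ (m * k)! * (k ! * (m + 1) ^ k) := Nat.mul_le_mul_right _ ih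
      _ ≤ (m * k + k)! := factorial_aux m k k le_rfl
      _ = ((m + 1) * k)! := by ring_nf

/-- Corrected analysis of the comparison-based lower bound for the range median
problem: the number `l := n! / (k! · ((n/k − 1)!)^k)` of distinguishable input
orderings satisfies `log l = Ω(n log k)` (natural logarithm). -/
theorem range_median_lower_bound_count :
    ∃ c : ℝ, 0 < c ∧ ∃ N : ℕ, ∀ n k : ℕ, N ≤ n → 2 ≤ k → 2 * k ≤ n → k ∣ n →
      c * n * Real.log k ≤
        Real.log ((n ! : ℝ) / ((k ! : ℝ) * ((n / k - 1)! : ℝ) ^ k)) := by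
  refine ⟨1/4, by norm_num, 0, fun n k _ hk2 h2k hdvd => ?_⟩
  set m := n / k with hm_def
  have hk0 : 0 < k := by omega
  have hmk : m * k = n := Nat.div_mul_cancel hdvd
  have hm2 : 2 ≤ m := by
    by_contra h
    push_neg at h
    interval_cases m <;> omega
  -- key ℕ inequality
  have hnat : (k !) ^ (m - 1) * (k ! * ((m - 1)!) ^ k) ≤ n ! := by
    have h1 : (k !) ^ (m - 1) * (k ! * ((m - 1)!) ^ k) = (k !) ^ m * ((m - 1)!) ^ k := by
      rw [← mul_assoc, ← pow_succ]
      congr 2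
      omega
    rw [h1]
    calc (k !) ^ m * ((m - 1)!) ^ k
        ≤ (k !) ^ m * (m !) ^ k := by
          apply Nat.mul_le_mul_left
          exact Nat.pow_le_pow_left (Nat.factorial_le (by omega)) k
      _ ≤ (m * k)! := factorial_pow_mul_le k m
      _ = n ! := by rw [hmk]
  -- positivity
  have hkfac : (0:ℝ) < (k ! : ℝ) := by exact_mod_cast Nat.factorial_pos k
  have hD : (0:ℝ) < (k ! : ℝ) * ((m - 1)! : ℝ) ^ k := by positivity
  have hA : ((k ! : ℝ)) ^ (m - 1) ≤ (n ! : ℝ) / ((k ! : ℝ) * ((m - 1)! : ℝ) ^ k) := by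
    rw [le_div_iff₀ hD]
    exact_mod_cast hnat
  have hApos : (0:ℝ) < ((k ! : ℝ)) ^ (m - 1) := by positivity
  have hlog1 : ((m - 1 : ℕ) : ℝ) * Real.log (k !) ≤
      Real.log ((n ! : ℝ) / ((k ! : ℝ) * ((m - 1)! : ℝ) ^ k)) := by
    rw [← Real.log_pow]
    exact Real.log_le_log hApos hA
  -- log k! ≥ (k/2) log k
  have hlog2 : (k : ℝ) * Real.log k ≤ 2 * Real.log (k !) := by
    have h := pow_self_le_factorial_sq k
    have h' : ((k : ℝ)) ^ k ≤ ((k ! : ℝ)) ^ 2 := by exact_mod_cast h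
    have hkpos : (0:ℝ) < (k : ℝ) ^ k := by positivity
    have := Real.log_le_log hkpos h'
    rwa [Real.log_pow, Real.log_pow] at this
  have hL : (0:ℝ) ≤ Real.log k := Real.log_nonneg (by exact_mod_cast hk0)
  have hF : (0:ℝ) ≤ Real.log (k !) := by
    nlinarith [mul_nonneg (show (0:ℝ) ≤ (k:ℝ) by positivity) hL]
  have hcast : ((m - 1 : ℕ) : ℝ) = (m : ℝ) - 1 := by
    have : 1 ≤ m := by omega
    push_cast [Nat.cast_sub this]
    ring
  have hn : (n : ℝ) = (m : ℝ) * k := by exact_mod_cast hmk.symm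
  have hm2' : (2:ℝ) ≤ (m:ℝ) := by exact_mod_cast hm2
  have hk2' : (2:ℝ) ≤ (k:ℝ) := by exact_mod_cast hk2
  calc (1/4 : ℝ) * n * Real.log k ≤ ((m - 1 : ℕ) : ℝ) * Real.log (k !) := by
        rw [hcast, hn]
        nlinarith [mul_nonneg hL (show (0:ℝ) ≤ (k:ℝ) by linarith),
          mul_nonneg (sub_nonneg.2 hm2') hF,
          mul_nonneg (mul_nonneg (sub_nonneg.2 hm2') hL) (show (0:ℝ) ≤ (k:ℝ) by linarith)]
    _ ≤ _ := hlog1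
end
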